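/- Fix a real c with 0 < c < 1, and let G₁ and G₂ be two independent random graphs on vertex set {1,…,n}, each distributed as G(n, p) with p = c/n; colour the edges of G₁ red and the edges of G₂ blue. Then the probability that the coloured graph G = G₁ ∪ G₂ contains an odd bicycle tends to 0 as n → ∞. -/

import Mathlib

open Filter Finset

open scoped Classical

/-- Two hypergraphs (given by their edge sets) on the vertex set `{1,…,n}`
admit disjoint covers. -/
def DisjointCovers {n : ℕ} (H₁ H₂ : Finset (Finset (Fin n))) : Prop :=
  ∃ C₁ C₂ : Finset (Fin n), Disjoint C₁ C₂ ∧
    (∀ e ∈ H₁, ∃ v ∈ e, v ∈ C₁) ∧ (∀ e ∈ H₂, ∃ v ∈ e, v ∈ C₂)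

/-- All possible edges of a `k`-uniform hypergraph on `{1,…,n}`. -/
noncomputable def allEdges (n k : ℕ) : Finset (Finset (Fin n)) :=
  Finset.univ.filter (fun e => e.card = k)

/-- The probability, under two independent copies of the binomial random
`k`-uniform hypergraph `H_k(n,p)` (each possible edge present independently
with probability `p`), that the pair `(H₁, H₂)` satisfies `P`. -/
noncomputable def probPair (n k : ℕ) (p : ℝ)
    (P : Finset (Finset (Fin n)) → Finset (Finset (Fin n)) → Prop) : ℝ :=
  ∑ H₁ ∈ (allEdges n k).powerset, ∑ H₂ ∈ (allEdges n k).powerset,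
    if P H₁ H₂ then
      (p ^ H₁.card * (1 - p) ^ ((allEdges n k).card - H₁.card)) *
        (p ^ H₂.card * (1 - p) ^ ((allEdges n k).card - H₂.card))
    else 0

/-- The colour of the `i`-th edge of an alternating sequence whose first edge
has colour `b` (`true` = red, `false` = blue). -/
def altColour (b : Bool) (i : ℕ) : Bool := if Even i then b else !b

/-- `v 0, …, v (m-1)` (with `m` odd, `m ≥ 3`) is an odd alternating cycle in
the coloured graph with red edge set `H₁` and blue edge set `H₂`: the vertices
are distinct, consecutive edge colours alternate around the cycle, and the two
edges at `v 0` both have the same colour `b`. -/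
def IsOddAltCycle {n : ℕ} (H₁ H₂ : Finset (Finset (Fin n))) (b : Bool) (m : ℕ)
    (v : ℕ → Fin n) : Prop :=
  Odd m ∧ 3 ≤ m ∧ (∀ i < m, ∀ j < m, v i = v j → i = j) ∧
  ∀ i < m, ({v i, v ((i + 1) % m)} : Finset (Fin n)) ∈
    (if altColour b i then H₁ else H₂)

/-- The coloured graph with red edges `H₁` and blue edges `H₂` contains an odd
bicycle: two vertex-disjoint odd alternating cycles `v` and `u`, on each of
which the two edges at the initial vertex have the same colour (`b₁`, resp.
`b₂`), together with an alternating path `w 0 = v 0, …, w (r+1) = u 0` whose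
first edge has colour distinct from `b₁` and whose last edge has colour
distinct from `b₂`. -/
def OddBicycle {n : ℕ} (H₁ H₂ : Finset (Finset (Fin n))) : Prop :=
  ∃ (b₁ b₂ : Bool) (p q : ℕ) (v u : ℕ → Fin n),
    IsOddAltCycle H₁ H₂ b₁ p v ∧ IsOddAltCycle H₁ H₂ b₂ q u ∧
    (∀ i < p, ∀ j < q, v i ≠ u j) ∧
    ∃ (r : ℕ) (w : ℕ → Fin n),
      w 0 = v 0 ∧ w (r + 1) = u 0 ∧
      (∀ i ≤ r, ({w i, w (i + 1)} : Finset (Fin n)) ∈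
        (if altColour (!b₁) i then H₁ else H₂)) ∧
      altColour (!b₁) r = !b₂

section Weights

variable {α : Type*} [DecidableEq α]

lemma sum_w_one (p : ℝ) (E : Finset α) :
    ∑ H ∈ E.powerset, p ^ H.card * (1 - p) ^ (E.card - H.card) = 1 := by
  induction E using Finset.induction_on with
  | empty => simp
  | @insert a s ha ih =>
    rw [Finset.sum_powerset_insert ha]
    have h1 : ∀ t ∈ s.powerset, p ^ t.card * (1 - p) ^ ((insert a s).card - t.card)
        = (1 - p) * (p ^ t.card * (1 - p) ^ (s.card - t.card)) := by
      intro t ht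
      have hts : t ⊆ s := Finset.mem_powerset.mp ht
      have : t.card ≤ s.card := Finset.card_le_card hts
      rw [Finset.card_insert_of_notMem ha]
      have : s.card + 1 - t.card = (s.card - t.card) + 1 := by omega
      rw [this, pow_succ]
      ring
    have h2 : ∀ t ∈ s.powerset, p ^ (insert a t).card * (1 - p) ^ ((insert a s).card - (insert a t).card)
        = p * (p ^ t.card * (1 - p) ^ (s.card - t.card)) := by
      intro t ht
      have hts : t ⊆ s := Finset.mem_powerset.mp ht
      have hat : a ∉ t := fun h => ha (hts h)
      rw [Finset.card_insert_of_notMem ha, Finset.card_insert_of_notMem hat]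
      have : s.card + 1 - (t.card + 1) = s.card - t.card := by omega
      rw [this, pow_succ]
      ring
    rw [Finset.sum_congr rfl h1, Finset.sum_congr rfl h2, ← Finset.mul_sum, ← Finset.mul_sum, ih]
    ring

lemma sum_w_subset (p : ℝ) (E S : Finset α) (hS : S ⊆ E) :
    ∑ H ∈ E.powerset, (if S ⊆ H then p ^ H.card * (1 - p) ^ (E.card - H.card) else 0)
      = p ^ S.card := by
  rw [← Finset.sum_filter]
  have hbij : ∑ H ∈ E.powerset.filter (fun H => S ⊆ H),
      p ^ H.card * (1 - p) ^ (E.card - H.card)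
      = ∑ K ∈ (E \ S).powerset, p ^ (K ∪ S).card * (1 - p) ^ (E.card - (K ∪ S).card) := by
    refine Finset.sum_nbij' (fun H => H \ S) (fun K => K ∪ S) ?_ ?_ ?_ ?_ ?_
    · intro H hH
      simp only [Finset.mem_filter, Finset.mem_powerset] at hH
      exact Finset.mem_powerset.mpr (Finset.sdiff_subset_sdiff hH.1 (le_refl _))
    · intro K hK
      simp only [Finset.mem_powerset] at hK
      simp only [Finset.mem_filter, Finset.mem_powerset]
      constructor
      · exact Finset.union_subset (hK.trans (Finset.sdiff_subset)) hS
      · exact Finset.subset_union_right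
    · intro H hH
      simp only [Finset.mem_filter, Finset.mem_powerset] at hH
      exact Finset.sdiff_union_of_subset hH.2
    · intro K hK
      simp only [Finset.mem_powerset] at hK
      apply Finset.union_sdiff_cancel_right
      have : Disjoint K S := by
        refine Finset.disjoint_left.mpr ?_
        intro x hxK hxS
        have := hK hxK
        simp [Finset.mem_sdiff] at this
        exact this.2 hxS
      exact this
    · intro H hH
      simp only [Finset.mem_filter, Finset.mem_powerset] at hH
      rw [Finset.sdiff_union_of_subset hH.2]
  rw [hbij]
  have hterm : ∀ K ∈ (E \ S).powerset,
      p ^ (K ∪ S).card * (1 - p) ^ (E.card - (K ∪ S).card)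
      = p ^ S.card * (p ^ K.card * (1 - p) ^ ((E \ S).card - K.card)) := by
    intro K hK
    have hK' : K ⊆ E \ S := Finset.mem_powerset.mp hK
    have hdisj : Disjoint K S := by
      refine Finset.disjoint_left.mpr ?_
      intro x hxK hxS
      have := hK' hxK
      rw [Finset.mem_sdiff] at this
      exact this.2 hxS
    have hcard : (K ∪ S).card = K.card + S.card := Finset.card_union_of_disjoint hdisj
    have hcs : (E \ S).card = E.card - S.card := Finset.card_sdiff_of_subset hS
    have h1 : K.card ≤ (E \ S).card := Finset.card_le_card hK'
    have h2 : S.card ≤ E.card := Finset.card_le_card hS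
    have h3 : E.card - (K.card + S.card) = (E \ S).card - K.card := by omega
    rw [hcard, h3, pow_add]
    ring
  rw [Finset.sum_congr rfl hterm, ← Finset.mul_sum, sum_w_one]
  ring

end Weights
section ProbPair

variable {n k : ℕ} {p : ℝ}

lemma weight_nonneg (h0 : 0 ≤ p) (h1 : p ≤ 1) (H : Finset (Finset (Fin n))) :
    0 ≤ p ^ H.card * (1 - p) ^ ((allEdges n k).card - H.card) :=
  mul_nonneg (pow_nonneg h0 _) (pow_nonneg (by linarith) _)

lemma probPair_nonneg (h0 : 0 ≤ p) (h1 : p ≤ 1)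
    (P : Finset (Finset (Fin n)) → Finset (Finset (Fin n)) → Prop) :
    0 ≤ probPair n k p P := by
  unfold probPair
  refine Finset.sum_nonneg fun H₁ _ => Finset.sum_nonneg fun H₂ _ => ?_
  split
  · exact mul_nonneg (weight_nonneg h0 h1 H₁) (weight_nonneg h0 h1 H₂)
  · exact le_refl _

lemma probPair_mono (h0 : 0 ≤ p) (h1 : p ≤ 1)
    {P Q : Finset (Finset (Fin n)) → Finset (Finset (Fin n)) → Prop}
    (himp : ∀ H₁ H₂, P H₁ H₂ → Q H₁ H₂) :
    probPair n k p P ≤ probPair n k p Q := by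
  unfold probPair
  refine Finset.sum_le_sum fun H₁ _ => Finset.sum_le_sum fun H₂ _ => ?_
  by_cases h : P H₁ H₂
  · rw [if_pos h, if_pos (himp _ _ h)]
  · rw [if_neg h]
    split
    · exact mul_nonneg (weight_nonneg h0 h1 H₁) (weight_nonneg h0 h1 H₂)
    · exact le_refl _

lemma probPair_congr
    {P Q : Finset (Finset (Fin n)) → Finset (Finset (Fin n)) → Prop}
    (hiff : ∀ H₁ H₂, P H₁ H₂ ↔ Q H₁ H₂) :
    probPair n k p P = probPair n k p Q := by
  unfold probPair
  refine Finset.sum_congr rfl fun H₁ _ => Finset.sum_congr rfl fun H₂ _ => ?_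
  rw [if_congr (hiff H₁ H₂) rfl rfl]

lemma probPair_false
    {P : Finset (Finset (Fin n)) → Finset (Finset (Fin n)) → Prop}
    (h : ∀ H₁ H₂, ¬ P H₁ H₂) :
    probPair n k p P = 0 := by
  unfold probPair
  refine Finset.sum_eq_zero fun H₁ _ => Finset.sum_eq_zero fun H₂ _ => ?_
  rw [if_neg (h H₁ H₂)]

lemma probPair_exists_le (h0 : 0 ≤ p) (h1 : p ≤ 1) {ι : Type*} (F : Finset ι)
    (Q : ι → Finset (Finset (Fin n)) → Finset (Finset (Fin n)) → Prop) :
    probPair n k p (fun H₁ H₂ => ∃ z ∈ F, Q z H₁ H₂) ≤ ∑ z ∈ F, probPair n k p (Q z) := by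
  have swap : ∑ z ∈ F, probPair n k p (Q z)
      = ∑ H₁ ∈ (allEdges n k).powerset, ∑ H₂ ∈ (allEdges n k).powerset, ∑ z ∈ F,
          (if Q z H₁ H₂ then
            (p ^ H₁.card * (1 - p) ^ ((allEdges n k).card - H₁.card)) *
              (p ^ H₂.card * (1 - p) ^ ((allEdges n k).card - H₂.card)) else 0) := by
    unfold probPair
    rw [Finset.sum_comm]
    exact Finset.sum_congr rfl fun H₁ _ => Finset.sum_comm
  rw [swap]
  unfold probPair
  refine Finset.sum_le_sum fun H₁ _ => ?_
  refine Finset.sum_le_sum fun H₂ _ => ?_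
  by_cases h : ∃ z ∈ F, Q z H₁ H₂
  · obtain ⟨z, hzF, hz⟩ := h
    rw [if_pos ⟨z, hzF, hz⟩]
    have hle := Finset.single_le_sum (f := fun z => if Q z H₁ H₂ then
        (p ^ H₁.card * (1 - p) ^ ((allEdges n k).card - H₁.card)) *
          (p ^ H₂.card * (1 - p) ^ ((allEdges n k).card - H₂.card)) else 0)
      (fun z _ => by
        split
        · exact mul_nonneg (weight_nonneg h0 h1 H₁) (weight_nonneg h0 h1 H₂)
        · exact le_refl _) hzF
    simp only [if_pos hz] at hle
    exact hle
  · rw [if_neg h]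
    refine Finset.sum_nonneg fun z _ => ?_
    split
    · exact mul_nonneg (weight_nonneg h0 h1 H₁) (weight_nonneg h0 h1 H₂)
    · exact le_refl _

lemma probPair_subsets_le (h0 : 0 ≤ p) (h1 : p ≤ 1) (S₁ S₂ : Finset (Finset (Fin n))) :
    probPair n k p (fun H₁ H₂ => S₁ ⊆ H₁ ∧ S₂ ⊆ H₂) ≤ p ^ (S₁.card + S₂.card) := by
  have hfact : probPair n k p (fun H₁ H₂ => S₁ ⊆ H₁ ∧ S₂ ⊆ H₂)
      = (∑ H ∈ (allEdges n k).powerset,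
          (if S₁ ⊆ H then p ^ H.card * (1 - p) ^ ((allEdges n k).card - H.card) else 0))
        * (∑ H ∈ (allEdges n k).powerset,
          (if S₂ ⊆ H then p ^ H.card * (1 - p) ^ ((allEdges n k).card - H.card) else 0)) := by
    unfold probPair
    rw [Finset.sum_mul_sum]
    refine Finset.sum_congr rfl fun H₁ _ => Finset.sum_congr rfl fun H₂ _ => ?_
    by_cases h1' : S₁ ⊆ H₁ <;> by_cases h2' : S₂ ⊆ H₂ <;>
      simp [h1', h2']
  rw [hfact, pow_add]
  have key : ∀ S : Finset (Finset (Fin n)),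
      (0 ≤ ∑ H ∈ (allEdges n k).powerset,
          (if S ⊆ H then p ^ H.card * (1 - p) ^ ((allEdges n k).card - H.card) else 0)) ∧
      (∑ H ∈ (allEdges n k).powerset,
          (if S ⊆ H then p ^ H.card * (1 - p) ^ ((allEdges n k).card - H.card) else 0))
        ≤ p ^ S.card := by
    intro S
    constructor
    · refine Finset.sum_nonneg fun H _ => ?_
      split
      · exact weight_nonneg h0 h1 H
      · exact le_refl _
    · by_cases hS : S ⊆ allEdges n k
      · rw [sum_w_subset p (allEdges n k) S hS]
      · have : ∀ H ∈ (allEdges n k).powerset,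
            (if S ⊆ H then p ^ H.card * (1 - p) ^ ((allEdges n k).card - H.card) else 0) = 0 := by
          intro H hH
          rw [if_neg]
          intro hcon
          exact hS (hcon.trans (Finset.mem_powerset.mp hH))
        rw [Finset.sum_congr rfl this, Finset.sum_const, smul_zero]
        exact pow_nonneg h0 _
  exact mul_le_mul (key S₁).2 (key S₂).2 (key S₂).1 (pow_nonneg h0 _)

end ProbPair
section AltColour

lemma altColour_even {b : Bool} {i : ℕ} (h : Even i) : altColour b i = b := by
  simp [altColour, h]

lemma altColour_odd {b : Bool} {i : ℕ} (h : Odd i) : altColour b i = !b := by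
  simp [altColour, Nat.not_even_iff_odd.mpr h]

lemma altColour_succ (b : Bool) (i : ℕ) : altColour b (i + 1) = !(altColour b i) := by
  rcases Nat.even_or_odd i with h | h
  · rw [altColour_even h, altColour_odd (Even.add_one h)]
  · rw [altColour_odd h, altColour_even (Odd.add_one h), Bool.not_not]

lemma altColour_add (b : Bool) (s t : ℕ) :
    altColour b (s + t) = altColour (altColour b s) t := by
  induction t with
  | zero => simp [altColour]
  | succ t ih => rw [← Nat.add_assoc, altColour_succ, ih, altColour_succ]

lemma altColour_parity {b : Bool} {i j : ℕ} (h : altColour b i = altColour b j) :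
    i % 2 = j % 2 := by
  rcases Nat.even_or_odd i with hi | hi <;> rcases Nat.even_or_odd j with hj | hj
  · rw [Nat.even_iff] at hi hj; omega
  · exfalso
    rw [altColour_even hi, altColour_odd hj] at h
    simp at h
  · exfalso
    rw [altColour_odd hi, altColour_even hj] at h
    simp at h
  · rw [Nat.odd_iff] at hi hj; omega

end AltColour

section Shape

/-- Index constraints for a certificate: an alternating trail of length `ℓ`
whose vertices are pairwise distinct except that position `j` repeats
position `a` and position `ℓ` repeats position `b`. -/
def goodShape (ℓ j a b : ℕ) : Prop :=
  1 ≤ j ∧ j + 1 ≤ ℓ ∧ a < j ∧ b < ℓ ∧ b ≠ j ∧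
  (ℓ = j + 1 → ¬(b = a + 1 ∧ Even (j + a)) ∧ ¬(a = b + 1 ∧ Even (j + b)))

def CertAt {n : ℕ} (H₁ H₂ : Finset (Finset (Fin n))) (γ : Bool) (ℓ j a b : ℕ)
    (x : ℕ → Fin n) : Prop :=
  (∀ s < ℓ, ∀ t < ℓ, s ≠ j → t ≠ j → x s = x t → s = t) ∧
  x j = x a ∧ x ℓ = x b ∧
  ∀ i < ℓ, ({x i, x (i + 1)} : Finset (Fin n)) ∈ (if altColour γ i then H₁ else H₂)

def Cert {n : ℕ} (H₁ H₂ : Finset (Finset (Fin n))) : Prop :=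
  ∃ (γ : Bool) (ℓ j a b : ℕ) (x : ℕ → Fin n),
    ℓ ≤ n + 1 ∧ goodShape ℓ j a b ∧ CertAt H₁ H₂ γ ℓ j a b x

variable {n ℓ j a b : ℕ} {x : ℕ → Fin n}

/-- All coincidences among the vertices of a certificate trail. -/
lemma cert_ident (hg : goodShape ℓ j a b)
    (hinj : ∀ s < ℓ, ∀ t < ℓ, s ≠ j → t ≠ j → x s = x t → s = t)
    (hja : x j = x a) (hlb : x ℓ = x b) :
    ∀ s t, s < t → t ≤ ℓ → x s = x t →
      (s = a ∧ t = j) ∨ (s = b ∧ t = ℓ) ∨ (s = j ∧ t = ℓ ∧ a = b) := by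
  obtain ⟨hj1, hjl, haj, hbl, hbj, -⟩ := hg
  intro s t hst htl hxst
  by_cases ht : t = ℓ
  · subst ht
    by_cases hs : s = j
    · subst hs
      right; right
      refine ⟨rfl, rfl, ?_⟩
      have : x a = x b := by rw [← hja, ← hlb, hxst]
      exact hinj a (by omega) b hbl (by omega) hbj this
    · right; left
      refine ⟨?_, rfl⟩
      have : x s = x b := by rw [← hlb, hxst]
      exact hinj s (by omega) b hbl hs hbj this
  · have htl' : t < ℓ := lt_of_le_of_ne htl ht
    by_cases htj : t = j
    · subst htj
      left
      refine ⟨?_, rfl⟩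
      have : x s = x a := by rw [← hja, hxst]
      exact hinj s (by omega) a (by omega) (by omega) (by omega) this
    · by_cases hsj : s = j
      · subst hsj
        exfalso
        have : x a = x t := by rw [← hja, hxst]
        have := hinj a (by omega) t htl' (by omega) htj this
        omega
      · exfalso
        have := hinj s (by omega) t htl' hsj htj hxst
        omega

lemma pair_cases {α : Type*} [DecidableEq α] {a b c d : α}
    (h : ({a, b} : Finset α) = {c, d}) : (a = c ∧ b = d) ∨ (a = d ∧ b = c) := by
  have ha : a = c ∨ a = d := by
    have : a ∈ ({c, d} : Finset α) := by rw [← h]; simp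
    simpa using this
  have hb : b = c ∨ b = d := by
    have : b ∈ ({c, d} : Finset α) := by rw [← h]; simp
    simpa using this
  have hc : c = a ∨ c = b := by
    have : c ∈ ({a, b} : Finset α) := by rw [h]; simp
    simpa using this
  have hd : d = a ∨ d = b := by
    have : d ∈ ({a, b} : Finset α) := by rw [h]; simp
    simpa using this
  rcases ha with h1 | h1
  · rcases hb with h2 | h2
    · rcases hd with h3 | h3
      · left; exact ⟨h1, by rw [h2, ← h1, ← h3]⟩
      · left; exact ⟨h1, h3.symm⟩
    · left; exact ⟨h1, h2⟩
  · rcases hb with h2 | h2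
    · right; exact ⟨h1, h2⟩
    · rcases hc with h3 | h3
      · right; exact ⟨h1, by rw [h2, h3, h1]⟩
      · right; exact ⟨h1, h3.symm⟩

/-- Distinct same-colour edges of a certificate trail are distinct as pairs. -/
lemma cert_edge_inj (hg : goodShape ℓ j a b)
    (hinj : ∀ s < ℓ, ∀ t < ℓ, s ≠ j → t ≠ j → x s = x t → s = t)
    (hja : x j = x a) (hlb : x ℓ = x b) :
    ∀ i k, i < k → k < ℓ → i % 2 = k % 2 →
      ({x i, x (i + 1)} : Finset (Fin n)) = {x k, x (k + 1)} → False := by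
  intro i k hik hkl hpar hpair
  have hid := cert_ident hg hinj hja hlb
  obtain ⟨hj1, hjl, haj, hbl, hbj, hbad⟩ := hg
  have hik1 : i + 1 < k := by
    rcases Nat.lt_or_ge (i + 1) k with h | h
    · exact h
    · exfalso
      have : i + 1 = k := by omega
      omega
  rcases pair_cases hpair with ⟨h1, h2⟩ | ⟨h1, h2⟩
  · -- same direction: x i = x k, x (i+1) = x (k+1)
    rcases hid i k hik (by omega) h1 with ⟨hia, hkj⟩ | ⟨-, hkl'⟩ | ⟨-, hkl', -⟩
    · rcases hid (i + 1) (k + 1) (by omega) (by omega) h2 with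
        ⟨-, hkj'⟩ | ⟨hib, hkl'⟩ | ⟨hij', -, -⟩
      · omega
      · -- ℓ = k+1 = j+1, b = i+1 = a+1
        have h1' : ℓ = j + 1 := by omega
        have := (hbad h1').1
        apply this
        constructor
        · omega
        · rw [Nat.even_add]
          rw [Nat.even_iff, Nat.even_iff]
          omega
      · omega
    · omega
    · omega
  · -- opposite direction: x i = x (k+1), x (i+1) = x k
    rcases hid (i + 1) k hik1 (by omega) h2 with ⟨hia, hkj⟩ | ⟨-, hkl'⟩ | ⟨-, hkl', -⟩
    · rcases hid i (k + 1) (by omega) (by omega) h1 with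
        ⟨-, hkj'⟩ | ⟨hib, hkl'⟩ | ⟨hij', -, -⟩
      · omega
      · -- ℓ = k+1 = j+1, a = i+1 = b+1
        have h1' : ℓ = j + 1 := by omega
        have := (hbad h1').2
        apply this
        constructor
        · omega
        · rw [Nat.even_add]
          rw [Nat.even_iff, Nat.even_iff]
          omega
      · omega
    · omega
    · omega

end Shape
section Core

variable {n : ℕ} {p : ℝ}

/-- The trail determined by a list of fresh vertices `y` and a repeat shape. -/
noncomputable def xyF {n : ℕ} (ℓ j a b : ℕ) (y : ℕ → Fin n) : ℕ → Fin n :=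
  fun s => if s = j then y a
    else if s = ℓ then y (if b < j then b else b - 1)
    else y (if s < j then s else s - 1)

def Qcore {n : ℕ} (γ : Bool) (ℓ j a b : ℕ) (y : ℕ → Fin n)
    (H₁ H₂ : Finset (Finset (Fin n))) : Prop :=
  (∀ s < ℓ - 1, ∀ t < ℓ - 1, y s = y t → s = t) ∧
  ∀ i < ℓ, ({xyF ℓ j a b y i, xyF ℓ j a b y (i + 1)} : Finset (Fin n)) ∈
    (if altColour γ i then H₁ else H₂)

lemma core_le (h0 : 0 ≤ p) (h1 : p ≤ 1) {γ : Bool} {ℓ j a b : ℕ}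
    (hg : goodShape ℓ j a b) (y : ℕ → Fin n) :
    probPair n 2 p (Qcore γ ℓ j a b y) ≤ p ^ ℓ := by
  by_cases hy : ∀ s < ℓ - 1, ∀ t < ℓ - 1, y s = y t → s = t
  · set x : ℕ → Fin n := xyF ℓ j a b y with hx
    obtain ⟨hj1, hjl, haj, hbl, hbj, -⟩ := id hg
    have hxS : ∀ s, s < ℓ → s ≠ j → x s = y (if s < j then s else s - 1) := by
      intro s hs hsj
      simp only [hx, xyF, if_neg hsj, if_neg (by omega : s ≠ ℓ)]
    have hinvlt : ∀ s, s < ℓ → s ≠ j → (if s < j then s else s - 1) < ℓ - 1 := by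
      intro s hs hsj
      split <;> omega
    have hinj : ∀ s < ℓ, ∀ t < ℓ, s ≠ j → t ≠ j → x s = x t → s = t := by
      intro s hs t ht hsj htj hxst
      rw [hxS s hs hsj, hxS t ht htj] at hxst
      have := hy _ (hinvlt s hs hsj) _ (hinvlt t ht htj) hxst
      split at this <;> split at this <;> omega
    have hja : x j = x a := by
      have h1' : x j = y a := by simp [hx, xyF]
      have h2' : x a = y a := by
        rw [hxS a (by omega) (by omega), if_pos haj]
      rw [h1', h2']
    have hlb : x ℓ = x b := by
      have h1' : x ℓ = y (if b < j then b else b - 1) := by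
        simp only [hx, xyF, if_neg (by omega : ℓ ≠ j)]
        simp
      have h2' : x b = y (if b < j then b else b - 1) := hxS b hbl hbj
      rw [h1', h2']
    have hedgeinj := cert_edge_inj hg hinj hja hlb
    set S₁ := ((Finset.range ℓ).filter (fun i => altColour γ i = true)).image
        (fun i => ({x i, x (i + 1)} : Finset (Fin n))) with hS₁
    set S₂ := ((Finset.range ℓ).filter (fun i => ¬ (altColour γ i = true))).image
        (fun i => ({x i, x (i + 1)} : Finset (Fin n))) with hS₂
    have hcong : probPair n 2 p (Qcore γ ℓ j a b y)
        = probPair n 2 p (fun H₁ H₂ => S₁ ⊆ H₁ ∧ S₂ ⊆ H₂) := by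
      refine probPair_congr fun H₁ H₂ => ?_
      constructor
      · rintro ⟨-, hedges⟩
        constructor
        · intro e he
          simp only [hS₁, Finset.mem_image, Finset.mem_filter, Finset.mem_range] at he
          obtain ⟨i, ⟨hi, hci⟩, rfl⟩ := he
          have := hedges i hi
          rwa [if_pos hci] at this
        · intro e he
          simp only [hS₂, Finset.mem_image, Finset.mem_filter, Finset.mem_range] at he
          obtain ⟨i, ⟨hi, hci⟩, rfl⟩ := he
          have := hedges i hi
          rwa [if_neg hci] at this
      · rintro ⟨hs1, hs2⟩
        refine ⟨hy, ?_⟩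
        intro i hi
        by_cases hci : altColour γ i = true
        · rw [if_pos hci]
          refine hs1 ?_
          simp only [hS₁, Finset.mem_image, Finset.mem_filter, Finset.mem_range]
          exact ⟨i, ⟨hi, hci⟩, rfl⟩
        · rw [if_neg hci]
          refine hs2 ?_
          simp only [hS₂, Finset.mem_image, Finset.mem_filter, Finset.mem_range]
          exact ⟨i, ⟨hi, hci⟩, rfl⟩
    rw [hcong]
    refine le_trans (probPair_subsets_le h0 h1 S₁ S₂) (le_of_eq ?_)
    have hparinj : ∀ i ∈ (Finset.range ℓ), ∀ k ∈ (Finset.range ℓ),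
        altColour γ i = altColour γ k →
        ({x i, x (i + 1)} : Finset (Fin n)) = {x k, x (k + 1)} → i = k := by
      intro i hi k hk hcol hpair
      rw [Finset.mem_range] at hi hk
      rcases lt_trichotomy i k with h | h | h
      · exact absurd hpair (fun hp => hedgeinj i k h hk (altColour_parity hcol) hp)
      · exact h
      · exact absurd hpair.symm
          (fun hp => hedgeinj k i h hi (altColour_parity hcol.symm) hp)
    have c1 : S₁.card = ((Finset.range ℓ).filter (fun i => altColour γ i = true)).card := by
      refine Finset.card_image_of_injOn ?_
      intro i hi k hk hpair
      rw [Finset.coe_filter, Set.mem_setOf_eq] at hi hk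
      exact hparinj i (by simpa using hi.1) k (by simpa using hk.1)
        (by rw [hi.2, hk.2]) hpair
    have c2 : S₂.card = ((Finset.range ℓ).filter (fun i => ¬(altColour γ i = true))).card := by
      refine Finset.card_image_of_injOn ?_
      intro i hi k hk hpair
      rw [Finset.coe_filter, Set.mem_setOf_eq] at hi hk
      have hci : altColour γ i = false := by
        cases hcival : altColour γ i
        · rfl
        · exact absurd hcival hi.2
      have hck : altColour γ k = false := by
        cases hckval : altColour γ k
        · rfl
        · exact absurd hckval hk.2
      exact hparinj i (by simpa using hi.1) k (by simpa using hk.1)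
        (by rw [hci, hck]) hpair
    rw [c1, c2, Finset.card_filter_add_card_filter_not, Finset.card_range]
  · have : probPair n 2 p (Qcore γ ℓ j a b y) = 0 :=
      probPair_false (fun H₁ H₂ h => hy h.1)
    rw [this]
    exact pow_nonneg h0 _

lemma body_le (h0 : 0 ≤ p) (h1 : p ≤ 1) (γ : Bool) (ℓ j a b : ℕ) :
    probPair n 2 p (fun H₁ H₂ => goodShape ℓ j a b ∧ ∃ x, CertAt H₁ H₂ γ ℓ j a b x)
      ≤ (n : ℝ) ^ (ℓ - 1) * p ^ ℓ := by
  by_cases hg : goodShape ℓ j a b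
  · obtain ⟨hj1, hjl, haj, hbl, hbj, -⟩ := id hg
    set m := ℓ - 1 with hm
    have hm1 : 1 ≤ m := by omega
    set F : Finset (ℕ → Fin n) := Finset.image
      (fun y₀ : Fin m → Fin n => (fun i : ℕ => y₀ ⟨i % m, Nat.mod_lt i hm1⟩))
      Finset.univ with hF
    have himp : ∀ H₁ H₂ : Finset (Finset (Fin n)),
        (goodShape ℓ j a b ∧ ∃ x, CertAt H₁ H₂ γ ℓ j a b x) →
        ∃ y ∈ F, Qcore γ ℓ j a b y H₁ H₂ := by
      rintro H₁ H₂ ⟨-, x, hxinj, hxja, hxlb, hxedge⟩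
      set y : ℕ → Fin n := fun i => x (if i % m < j then i % m else i % m + 1) with hy
      have hyF : y ∈ F := by
        rw [hF, Finset.mem_image]
        refine ⟨fun i : Fin m => x (if (i : ℕ) < j then (i : ℕ) else (i : ℕ) + 1),
          Finset.mem_univ _, ?_⟩
        funext i
        simp only [hy]
      have hys : ∀ s, s < m → y s = x (if s < j then s else s + 1) := by
        intro s hs
        simp only [hy]
        rw [Nat.mod_eq_of_lt hs]
      have helt : ∀ s, s < m → (if s < j then s else s + 1) < ℓ := by
        intro s hs; split <;> omega
      have henj : ∀ s, s < m → (if s < j then s else s + 1) ≠ j := by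
        intro s hs; split <;> omega
      refine ⟨y, hyF, ?_, ?_⟩
      · intro s hs t ht hyst
        rw [hys s hs, hys t ht] at hyst
        have heq := hxinj _ (helt s hs) _ (helt t ht) (henj s hs) (henj t ht) hyst
        by_cases hsj' : s < j <;> by_cases htj' : t < j <;>
          simp only [if_pos, if_neg, hsj', htj', if_true, if_false] at heq <;> omega
      · have hagree : ∀ s, s ≤ ℓ → xyF ℓ j a b y s = x s := by
          intro s hs
          by_cases hsj : s = j
          · rw [hsj]
            have h1' : xyF ℓ j a b y j = y a := by simp [xyF]
            rw [h1', hys a (by omega), if_pos haj, ← hxja]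
          · by_cases hsl : s = ℓ
            · rw [hsl]
              have h1' : xyF ℓ j a b y ℓ = y (if b < j then b else b - 1) := by
                simp only [xyF, if_neg (by omega : ℓ ≠ j)]
                simp
              rw [h1']
              by_cases hbj' : b < j
              · rw [if_pos hbj', hys b (by omega), if_pos hbj', ← hxlb]
              · rw [if_neg hbj', hys (b - 1) (by omega), if_neg (by omega : ¬ (b - 1 < j)),
                  (by omega : b - 1 + 1 = b), ← hxlb]
            · have hsl' : s < ℓ := by omega
              have h1' : xyF ℓ j a b y s = y (if s < j then s else s - 1) := by
                simp only [xyF, if_neg hsj, if_neg hsl]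
              rw [h1']
              by_cases hsj' : s < j
              · rw [if_pos hsj', hys s (by omega), if_pos hsj']
              · rw [if_neg hsj', hys (s - 1) (by omega), if_neg (by omega : ¬ (s - 1 < j)),
                  (by omega : s - 1 + 1 = s)]
        intro i hi
        rw [hagree i (by omega), hagree (i + 1) (by omega)]
        exact hxedge i hi
    refine le_trans (probPair_mono h0 h1 himp) ?_
    refine le_trans (probPair_exists_le h0 h1 F _) ?_
    refine le_trans (Finset.sum_le_card_nsmul F _ (p ^ ℓ)
      (fun y _ => core_le h0 h1 hg y)) ?_
    rw [nsmul_eq_mul]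
    refine mul_le_mul_of_nonneg_right ?_ (pow_nonneg h0 _)
    have hcard : F.card ≤ n ^ m := by
      refine le_trans (Finset.card_image_le) ?_
      rw [Finset.card_univ]
      simp
    calc (F.card : ℝ) ≤ ((n ^ m : ℕ) : ℝ) := Nat.cast_le.mpr hcard
      _ = (n : ℝ) ^ m := by push_cast; ring
  · have : probPair n 2 p
        (fun H₁ H₂ => goodShape ℓ j a b ∧ ∃ x, CertAt H₁ H₂ γ ℓ j a b x) = 0 :=
      probPair_false (fun H₁ H₂ h => hg h.1)
    rw [this]
    exact mul_nonneg (pow_nonneg (Nat.cast_nonneg n) _) (pow_nonneg h0 _)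

end Core
section Reduction

variable {n : ℕ}

lemma bicycle_cert {H₁ H₂ : Finset (Finset (Fin n))} (h : OddBicycle H₁ H₂) :
    Cert H₁ H₂ := by
  obtain ⟨b₁, b₂, pp, qq, v, u, hv, hu, hdisj, r, w, hw0, hwr, hwe, hwc⟩ := h
  obtain ⟨hpodd, hp3, hvinj, hve⟩ := hv
  obtain ⟨hqodd, hq3, huinj, hue⟩ := hu
  set L := r + 1 with hL
  set T : ℕ → Fin n := fun k =>
    if k < pp then v k else if k < pp + L then w (k - pp)
    else u ((k - (pp + L)) % qq) with hT
  have hTv : ∀ k, k < pp → T k = v k := fun k hk => by simp [hT, hk]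
  have hTw : ∀ i, i < L → T (pp + i) = w i := by
    intro i hi
    simp only [hT]
    rw [if_neg (by omega), if_pos (by omega)]
    congr 1
    omega
  have hTu : ∀ j', T (pp + L + j') = u (j' % qq) := by
    intro j'
    simp only [hT]
    rw [if_neg (by omega), if_neg (by omega)]
    congr 2
    omega
  have hT0 : T 0 = v 0 := hTv 0 (by omega)
  have hTp : T pp = v 0 := by
    have h1 := hTw 0 (by omega)
    rw [Nat.add_zero] at h1
    rw [h1, hw0]
  have hTpL : T (pp + L) = u 0 := by
    have h1 := hTu 0
    rw [Nat.add_zero] at h1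
    rwa [Nat.zero_mod] at h1
  have haltp : ∀ i, altColour b₁ (pp + i) = altColour (!b₁) i := by
    intro i
    rw [altColour_add, altColour_odd hpodd]
  have haltpq : ∀ j', altColour b₁ (pp + L + j') = altColour b₂ j' := by
    intro j'
    have hC : altColour (!b₁) L = b₂ := by
      rw [hL, altColour_succ, hwc, Bool.not_not]
    rw [Nat.add_assoc, altColour_add, altColour_odd hpodd, altColour_add, hC]
  have hE1 : ∀ k, k < pp + L + qq →
      ({T k, T (k + 1)} : Finset (Fin n)) ∈ (if altColour b₁ k then H₁ else H₂) := by
    intro k hk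
    by_cases hz1 : k + 1 < pp
    · rw [hTv k (by omega), hTv (k + 1) (by omega)]
      have h1 := hve k (by omega)
      rwa [Nat.mod_eq_of_lt hz1] at h1
    · by_cases hz2 : k + 1 = pp
      · rw [hTv k (by omega)]
        have hTk1 : T (k + 1) = v 0 := by rw [hz2, hTp]
        rw [hTk1]
        have h1 := hve k (by omega)
        rw [hz2, Nat.mod_self] at h1
        exact h1
      · by_cases hz3 : k < pp + L
        · have hkp : pp ≤ k := by omega
          obtain ⟨i, rfl⟩ : ∃ i, k = pp + i := ⟨k - pp, by omega⟩
          have hiL : i < L := by omega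
          rw [hTw i hiL]
          have hTk1 : T (pp + i + 1) = w (i + 1) := by
            by_cases hi1 : i + 1 < L
            · rw [show pp + i + 1 = pp + (i + 1) by ring, hTw (i + 1) hi1]
            · have hieq : i + 1 = L := by omega
              rw [show pp + i + 1 = pp + L + 0 by omega, hTu 0, Nat.zero_mod,
                show i + 1 = r + 1 by omega, hwr]
          rw [hTk1, haltp i]
          exact hwe i (by omega)
        · have hk2 : pp + L ≤ k := by omega
          obtain ⟨j', rfl⟩ : ∃ j', k = pp + L + j' := ⟨k - (pp + L), by omega⟩
          have hjq : j' < qq := by omega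
          rw [hTu j', Nat.mod_eq_of_lt hjq]
          have hTk1 : T (pp + L + j' + 1) = u ((j' + 1) % qq) := by
            rw [show pp + L + j' + 1 = pp + L + (j' + 1) by ring, hTu (j' + 1)]
          rw [hTk1, haltpq j']
          exact hue j' hjq
  have hQex : ∃ k, pp < k ∧ k ≤ pp + L + qq ∧ ∃ t, t < k ∧ T t = T k := by
    refine ⟨pp + L + qq, by omega, le_refl _, pp + L, by omega, ?_⟩
    rw [hTpL, hTu qq, Nat.mod_self]
  set ℓ₀ := Nat.find hQex with hℓ₀
  have hQℓ := Nat.find_spec hQex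
  have hQmin := fun k (hk : k < ℓ₀) => Nat.find_min hQex hk
  obtain ⟨hpℓ, hℓN, t₀, ht₀, hTt₀⟩ := hQℓ
  have hinj : ∀ s < ℓ₀, ∀ t < ℓ₀, s ≠ pp → t ≠ pp → T s = T t → s = t := by
    have haux : ∀ s t, s < t → t < ℓ₀ → t ≠ pp → T s = T t → False := by
      intro s t hst htℓ htp hTst
      by_cases htpp : t < pp
      · rw [hTv s (by omega), hTv t htpp] at hTst
        have := hvinj s (by omega) t htpp hTst
        omega
      · exact hQmin t htℓ ⟨by omega, by omega, s, hst, hTst⟩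
    intro s hs t ht hsp htp hTst
    rcases lt_trichotomy s t with hlt | heq | hgt
    · exact absurd hTst (fun hh => haux s t hlt ht htp hh)
    · exact heq
    · exact absurd hTst.symm (fun hh => haux t s hgt hs hsp hh)
  -- choice of b
  have hbb : ∃ bb, bb < ℓ₀ ∧ bb ≠ pp ∧ T ℓ₀ = T bb := by
    by_cases ht₀p : t₀ = pp
    · refine ⟨0, by omega, by omega, ?_⟩
      rw [← hTt₀, ht₀p, hTp, hT0]
    · exact ⟨t₀, ht₀, ht₀p, hTt₀.symm⟩
  obtain ⟨bb, hbbℓ, hbbp, hTℓb⟩ := hbb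
  -- bound on ℓ₀
  have hℓn : ℓ₀ ≤ n + 1 := by
    have hmem : pp ∈ Finset.range ℓ₀ := Finset.mem_range.mpr hpℓ
    have hcle : ((Finset.range ℓ₀).erase pp).card ≤ (Finset.univ : Finset (Fin n)).card := by
      refine Finset.card_le_card_of_injOn T (fun s _ => Finset.mem_univ _) ?_
      intro s hs t ht hTst
      rw [Finset.coe_erase, Set.mem_diff, Finset.mem_coe, Finset.mem_range] at hs ht
      exact hinj s hs.1 t ht.1 (by simpa using hs.2) (by simpa using ht.2) hTst
    rw [Finset.card_erase_of_mem hmem, Finset.card_range, Finset.card_univ,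
      Fintype.card_fin] at hcle
    omega
  refine ⟨b₁, ℓ₀, pp, 0, bb, T, hℓn, ?_, ?_⟩
  · refine ⟨by omega, by omega, by omega, hbbℓ, hbbp, ?_⟩
    intro hℓeq
    constructor
    · rintro ⟨-, h2'⟩
      rw [Nat.add_zero] at h2'
      have ho := Nat.odd_iff.mp hpodd
      have he := Nat.even_iff.mp h2'
      omega
    · rintro ⟨h1', -⟩
      omega
  · refine ⟨hinj, ?_, hTℓb, fun i hi => hE1 i (by omega)⟩
    rw [hTp, hT0]

end Reduction
section Assembly

lemma master_bound (c : ℝ) (hc0 : 0 < c) (hc1 : c < 1) (n : ℕ) (hn : 1 ≤ n) :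
    probPair n 2 (c / n) (fun H₁ H₂ => OddBicycle H₁ H₂)
      ≤ 2 * (∑' ℓ : ℕ, (ℓ : ℝ) ^ 3 * c ^ ℓ) / n := by
  have hnR : (1 : ℝ) ≤ (n : ℝ) := by exact_mod_cast hn
  have hnpos : (0 : ℝ) < (n : ℝ) := by linarith
  set p : ℝ := c / n with hp
  have h0 : 0 ≤ p := div_nonneg hc0.le hnpos.le
  have h1 : p ≤ 1 := by
    rw [hp, div_le_one hnpos]
    linarith
  have hsummable : Summable (fun ℓ : ℕ => (ℓ : ℝ) ^ 3 * c ^ ℓ) :=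
    summable_pow_mul_geometric_of_norm_lt_one 3
      (by rw [Real.norm_eq_abs, abs_of_pos hc0]; exact hc1)
  have hterm_nonneg : ∀ ℓ : ℕ, 0 ≤ (ℓ : ℝ) ^ 3 * c ^ ℓ := fun ℓ =>
    mul_nonneg (pow_nonneg (Nat.cast_nonneg ℓ) _) (pow_nonneg hc0.le _)
  have step1 : probPair n 2 p (fun H₁ H₂ => OddBicycle H₁ H₂)
      ≤ ∑ γ ∈ (Finset.univ : Finset Bool), ∑ ℓ ∈ Finset.range (n + 2),
          ∑ j ∈ Finset.range ℓ, ∑ a ∈ Finset.range ℓ, ∑ b ∈ Finset.range ℓ,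
            probPair n 2 p
              (fun H₁ H₂ => goodShape ℓ j a b ∧ ∃ x, CertAt H₁ H₂ γ ℓ j a b x) := by
    have hmono : ∀ H₁ H₂ : Finset (Finset (Fin n)), OddBicycle H₁ H₂ →
        ∃ γ ∈ (Finset.univ : Finset Bool), ∃ ℓ ∈ Finset.range (n + 2),
          ∃ j ∈ Finset.range ℓ, ∃ a ∈ Finset.range ℓ, ∃ b ∈ Finset.range ℓ,
            (goodShape ℓ j a b ∧ ∃ x, CertAt H₁ H₂ γ ℓ j a b x) := by
      intro H₁ H₂ hOB
      obtain ⟨γ, ℓ, j, a, b, x, hℓn, hg, hc⟩ := bicycle_cert hOB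
      obtain ⟨hj1, hjl, haj, hbl, hbj, -⟩ := id hg
      exact ⟨γ, Finset.mem_univ _, ℓ, Finset.mem_range.mpr (by omega),
        j, Finset.mem_range.mpr (by omega), a, Finset.mem_range.mpr (by omega),
        b, Finset.mem_range.mpr (by omega), hg, x, hc⟩
    refine le_trans (probPair_mono h0 h1 hmono) ?_
    refine le_trans (probPair_exists_le h0 h1 _ _) ?_
    refine Finset.sum_le_sum fun γ _ => ?_
    refine le_trans (probPair_exists_le h0 h1 _ _) ?_
    refine Finset.sum_le_sum fun ℓ _ => ?_
    refine le_trans (probPair_exists_le h0 h1 _ _) ?_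
    refine Finset.sum_le_sum fun j _ => ?_
    refine le_trans (probPair_exists_le h0 h1 _ _) ?_
    refine Finset.sum_le_sum fun a _ => ?_
    exact probPair_exists_le h0 h1 _ _
  refine le_trans step1 ?_
  have step2 : ∀ γ : Bool, ∀ ℓ, ℓ ∈ Finset.range (n + 2) →
      ∑ j ∈ Finset.range ℓ, ∑ a ∈ Finset.range ℓ, ∑ b ∈ Finset.range ℓ,
        probPair n 2 p (fun H₁ H₂ => goodShape ℓ j a b ∧ ∃ x, CertAt H₁ H₂ γ ℓ j a b x)
      ≤ (ℓ : ℝ) ^ 3 * c ^ ℓ / n := by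
    intro γ ℓ _
    have hb : ∑ j ∈ Finset.range ℓ, ∑ a ∈ Finset.range ℓ, ∑ b ∈ Finset.range ℓ,
        probPair n 2 p (fun H₁ H₂ => goodShape ℓ j a b ∧ ∃ x, CertAt H₁ H₂ γ ℓ j a b x)
        ≤ ∑ j ∈ Finset.range ℓ, ∑ a ∈ Finset.range ℓ, ∑ b ∈ Finset.range ℓ,
          ((n : ℝ) ^ (ℓ - 1) * p ^ ℓ) := by
      refine Finset.sum_le_sum fun j _ => Finset.sum_le_sum fun a _ =>
        Finset.sum_le_sum fun b _ => ?_
      exact body_le h0 h1 γ ℓ j a b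
    refine le_trans hb ?_
    have hconst : ∑ j ∈ Finset.range ℓ, ∑ a ∈ Finset.range ℓ, ∑ b ∈ Finset.range ℓ,
        ((n : ℝ) ^ (ℓ - 1) * p ^ ℓ) = (ℓ : ℝ) ^ 3 * ((n : ℝ) ^ (ℓ - 1) * p ^ ℓ) := by
      simp [Finset.sum_const, Finset.card_range, nsmul_eq_mul]
      ring
    rw [hconst]
    rcases Nat.eq_zero_or_pos ℓ with hℓ0 | hℓpos
    · subst hℓ0
      simp
    · have hval : (n : ℝ) ^ (ℓ - 1) * p ^ ℓ = c ^ ℓ / n := by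
        have hℓeq : ℓ - 1 + 1 = ℓ := by omega
        rw [hp, div_pow, ← hℓeq, pow_succ, Nat.add_sub_cancel]
        have hne : ((n : ℝ)) ^ (ℓ - 1) ≠ 0 := pow_ne_zero _ (by linarith)
        field_simp
        ring
      rw [hval, mul_div_assoc]
  refine le_trans (Finset.sum_le_sum fun γ _ =>
    Finset.sum_le_sum fun ℓ hℓ => step2 γ ℓ hℓ) ?_
  have hgsum : ∑ γ ∈ (Finset.univ : Finset Bool), ∑ ℓ ∈ Finset.range (n + 2),
      ((ℓ : ℝ) ^ 3 * c ^ ℓ / n)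
      = 2 * ((∑ ℓ ∈ Finset.range (n + 2), (ℓ : ℝ) ^ 3 * c ^ ℓ) / n) := by
    rw [Finset.sum_const, ← Finset.sum_div]
    simp [nsmul_eq_mul]
  rw [hgsum]
  have hle : (∑ ℓ ∈ Finset.range (n + 2), (ℓ : ℝ) ^ 3 * c ^ ℓ)
      ≤ ∑' ℓ : ℕ, (ℓ : ℝ) ^ 3 * c ^ ℓ :=
    Summable.sum_le_tsum _ (fun i _ => hterm_nonneg i) hsummable
  rw [mul_div_assoc]
  gcongr

end Assembly

/-- For `0 < c < 1` and two independent random graphs `G(n, c/n)` (red and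
blue), the probability that the coloured union contains an odd bicycle tends
to `0`. -/
theorem oddBicycle_prob_tendsto_zero (c : ℝ) (hc0 : 0 < c) (hc1 : c < 1) :
    Filter.Tendsto (fun n => probPair n 2 (c / n) (fun H₁ H₂ => OddBicycle H₁ H₂))
      Filter.atTop (nhds 0) := by
  refine squeeze_zero' ?_ ?_
    (tendsto_const_div_atTop_nhds_zero_nat (2 * (∑' ℓ : ℕ, (ℓ : ℝ) ^ 3 * c ^ ℓ)))
  · filter_upwards [Filter.eventually_ge_atTop 1] with n hn
    have hnR : (1 : ℝ) ≤ (n : ℝ) := by exact_mod_cast hn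
    refine probPair_nonneg (div_nonneg hc0.le (by linarith)) ?_ _
    rw [div_le_one (by linarith)]
    linarith
  · filter_upwards [Filter.eventually_ge_atTop 1] with n hn
    exact master_bound c hc0 hc1 n hn
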